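/- Let G be a graph and let M be a module of G such that the edge set of the induced subgraph G[M] forms a matching F_M. Let F be any matching of G and let P be an F-augmenting path of minimum length. Then P contains at most one edge of F_M. -/

import Mathlib

open SimpleGraph

/-- A module of a graph: every vertex outside `M` is adjacent to all of `M` or to none of `M`. -/
def IsModule {V : Type*} (G : SimpleGraph V) (M : Set V) : Prop :=
  ∀ x ∈ M, ∀ y ∈ M, ∀ z, z ∉ M → (G.Adj x z ↔ G.Adj y z)

/-- A matching: a set of edges of `G` with pairwise disjoint endpoints. -/
def IsMatching {V : Type*} (G : SimpleGraph V) (F : Set (Sym2 V)) : Prop :=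
  F ⊆ G.edgeSet ∧ ∀ e ∈ F, ∀ f ∈ F, ∀ v : V, v ∈ e → v ∈ f → e = f

/-- A vertex is matched by `F` if it is an endpoint of an edge of `F`. -/
def Matched {V : Type*} (F : Set (Sym2 V)) (v : V) : Prop := ∃ e ∈ F, v ∈ e

/-- The subgraph of `G` induced by `M`, viewed as a graph on the same vertex set. -/
def inducedOn {V : Type*} (G : SimpleGraph V) (M : Set V) : SimpleGraph V where
  Adj u v := G.Adj u v ∧ u ∈ M ∧ v ∈ M
  symm := ⟨fun u v ⟨h, hu, hv⟩ => ⟨h.symm, hv, hu⟩⟩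
  loopless := ⟨fun v h => G.loopless.1 v h.1⟩

/-- An `F`-augmenting path: a path whose two endpoints are exposed by `F` and whose
edges belong alternately to `E ∖ F` and to `F`. -/
def IsAugPath {V : Type*} (G : SimpleGraph V) (F : Set (Sym2 V)) {a b : V}
    (p : G.Walk a b) : Prop :=
  p.IsPath ∧ ¬Matched F a ∧ ¬Matched F b ∧ 0 < p.length ∧
  ∀ (i : ℕ) (h : i < p.edges.length), (p.edges.get ⟨i, h⟩ ∈ F ↔ Odd i)


section AuxProof

namespace SimpleGraph.Walk
variable {V : Type*} {G : SimpleGraph V}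

def takeW : ∀ {u v : V} (p : G.Walk u v) (n : ℕ), G.Walk u (p.getVert n)
  | _, _, .nil, _ => .nil
  | _, _, .cons h q, 0 => .nil
  | _, _, .cons h q, (n+1) => .cons h (q.takeW n)

def dropW : ∀ {u v : V} (p : G.Walk u v) (n : ℕ), G.Walk (p.getVert n) v
  | _, _, .nil, _ => .nil
  | _, _, .cons h q, 0 => .cons h q
  | _, _, .cons h q, (n+1) => q.dropW n

lemma length_takeW : ∀ {u v : V} (p : G.Walk u v) (n : ℕ), n ≤ p.length →
    (p.takeW n).length = n
  | _, _, .nil, 0, _ => rfl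
  | _, _, .nil, (n+1), h => by simp at h
  | _, _, .cons h q, 0, _ => rfl
  | _, _, .cons h q, (n+1), hn => by
    simpa [takeW] using length_takeW q n (by simpa using hn)

lemma length_dropW : ∀ {u v : V} (p : G.Walk u v) (n : ℕ),
    (p.dropW n).length = p.length - n
  | _, _, .nil, 0 => rfl
  | _, _, .nil, (n+1) => by simp [dropW]
  | _, _, .cons h q, 0 => rfl
  | _, _, .cons h q, (n+1) => by
    simpa [dropW] using length_dropW q n

lemma support_takeW : ∀ {u v : V} (p : G.Walk u v) (n : ℕ),
    (p.takeW n).support = p.support.take (n+1)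
  | _, _, .nil, 0 => rfl
  | _, _, .nil, (n+1) => rfl
  | _, _, .cons h q, 0 => rfl
  | _, _, .cons h q, (n+1) => by
    simpa [takeW] using support_takeW q n

lemma support_dropW : ∀ {u v : V} (p : G.Walk u v) (n : ℕ), n ≤ p.length →
    (p.dropW n).support = p.support.drop n
  | _, _, .nil, 0, _ => rfl
  | _, _, .nil, (n+1), h => by simp at h
  | _, _, .cons h q, 0, _ => rfl
  | _, _, .cons h q, (n+1), hn => by
    simpa [dropW] using support_dropW q n (by simpa using hn)

lemma edges_takeW : ∀ {u v : V} (p : G.Walk u v) (n : ℕ),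
    (p.takeW n).edges = p.edges.take n
  | _, _, .nil, 0 => rfl
  | _, _, .nil, (n+1) => rfl
  | _, _, .cons h q, 0 => rfl
  | _, _, .cons h q, (n+1) => by
    simpa [takeW] using edges_takeW q n

lemma edges_dropW : ∀ {u v : V} (p : G.Walk u v) (n : ℕ), n ≤ p.length →
    (p.dropW n).edges = p.edges.drop n
  | _, _, .nil, 0, _ => rfl
  | _, _, .nil, (n+1), h => by simp at h
  | _, _, .cons h q, 0, _ => rfl
  | _, _, .cons h q, (n+1), hn => by
    simpa [dropW] using edges_dropW q n (by simpa using hn)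

lemma support_getElem : ∀ {u v : V} (p : G.Walk u v) (n : ℕ) (h : n < p.support.length),
    p.support[n] = p.getVert n
  | _, _, .nil, 0, _ => rfl
  | _, _, .nil, (n+1), h => by simp at h
  | _, _, .cons h q, 0, _ => rfl
  | _, _, .cons h q, (n+1), hn => by
    simpa [getVert_cons_succ] using support_getElem q n (by simpa using hn)

lemma edges_getElem_eq : ∀ {u v : V} (p : G.Walk u v) (n : ℕ) (h : n < p.edges.length),
    p.edges[n] = s(p.getVert n, p.getVert (n+1))
  | _, _, .cons h q, 0, _ => by
    simp [getVert_cons_succ, getVert_zero]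
  | _, _, .cons h q, (n+1), hn => by
    simpa [getVert_cons_succ] using edges_getElem_eq q n (by simpa using hn)

lemma getVert_injOn {u v : V} {p : G.Walk u v} (hp : p.IsPath) {i j : ℕ}
    (hi : i ≤ p.length) (hj : j ≤ p.length) (h : p.getVert i = p.getVert j) : i = j := by
  have hl : p.support.length = p.length + 1 := by simp [length_support]
  have h1 : i < p.support.length := by omega
  have h2 : j < p.support.length := by omega
  have := hp.support_nodup
  rw [← support_getElem p i h1, ← support_getElem p j h2] at h
  exact (List.Nodup.getElem_inj_iff this).mp h

end SimpleGraph.Walk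

lemma shortcut {V : Type*} {G : SimpleGraph V} (F : Set (Sym2 V)) {a b : V}
    (p : G.Walk a b) (hp : IsAugPath G F p) {k m : ℕ} (hk : Even k) (hm : Odd m)
    (hkm : k + 2 ≤ m) (hmlen : m ≤ p.length)
    (hadj : G.Adj (p.getVert k) (p.getVert m))
    (hnF : s(p.getVert k, p.getVert m) ∉ F) :
    ∃ (q : G.Walk a b), IsAugPath G F q ∧ q.length < p.length := by
  classical
  obtain ⟨hpath, ha, hb, hpos, halt⟩ := hp
  have hklen : k ≤ p.length := by omega
  set q : G.Walk a b := (p.takeW k).append (Walk.cons hadj (p.dropW m)) with hq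
  have hqlen : q.length = k + 1 + (p.length - m) := by
    simp [hq, Walk.length_append, Walk.length_takeW p k hklen, Walk.length_dropW]
    omega
  have hqedges : q.edges = p.edges.take k ++ (s(p.getVert k, p.getVert m) :: p.edges.drop m) := by
    simp [hq, Walk.edges_append, Walk.edges_cons, Walk.edges_takeW,
      Walk.edges_dropW p m hmlen]
  have hqsupp : q.support = p.support.take (k+1) ++ p.support.drop m := by
    rw [hq, Walk.support_append, Walk.support_cons, List.tail_cons,
      Walk.support_takeW, Walk.support_dropW p m hmlen]
  refine ⟨q, ⟨?_, ha, hb, by omega, ?_⟩, by omega⟩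
  · rw [SimpleGraph.Walk.isPath_def, hqsupp]
    have hsub : List.Sublist (p.support.take (k+1) ++ p.support.drop m)
        (p.support.take (k+1) ++ p.support.drop (k+1)) := by
      apply List.Sublist.append_left
      have : p.support.drop m = (p.support.drop (k+1)).drop (m - (k+1)) := by
        rw [List.drop_drop]; congr 1; omega
      rw [this]
      exact List.drop_sublist _ _
    rw [List.take_append_drop] at hsub
    exact hpath.support_nodup.sublist hsub
  · intro i h
    have hel : p.edges.length = p.length := p.length_edges
    have htl : (p.edges.take k).length = k := by
      rw [List.length_take]; omega
    have hql : q.edges.length = k + 1 + (p.length - m) := by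
      rw [Walk.length_edges, hqlen]
    have hgE : q.edges.get ⟨i, h⟩ =
        (p.edges.take k ++ (s(p.getVert k, p.getVert m) :: p.edges.drop m))[i]'(by
          rw [← hqedges]; exact h) := by
      rw [List.get_eq_getElem]; exact List.getElem_of_eq hqedges _
    rw [hgE]
    rcases lt_trichotomy i k with hik | hik | hik
    · rw [List.getElem_append_left (by omega)]
      have : (p.edges.take k)[i]'(by omega) = p.edges[i]'(by omega) := by
        simp
      rw [this]
      simpa using halt i (by omega)
    · subst hik
      rw [List.getElem_append_right (by omega)]
      simp only [htl, Nat.sub_self, List.getElem_cons_zero]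
      rw [Nat.odd_iff] at hm ⊢
      rw [Nat.even_iff] at hk
      constructor
      · intro hc; exact absurd hc hnF
      · intro hc; omega
    · rw [List.getElem_append_right (by omega)]
      have h1 : i - (p.edges.take k).length = (i - k - 1) + 1 := by omega
      simp only [h1, List.getElem_cons_succ]
      have h2 : i < q.edges.length := h
      rw [hql] at h2
      have h3 : (p.edges.drop m)[i - k - 1]'(by rw [List.length_drop]; omega)
          = p.edges[m + (i - k - 1)]'(by omega) := by
        rw [List.getElem_drop]
      rw [h3]
      have := halt (m + (i - k - 1)) (by omega)
      simp only [List.get_eq_getElem] at this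
      rw [this]
      rw [Nat.odd_iff, Nat.odd_iff]
      rw [Nat.odd_iff] at hm; rw [Nat.even_iff] at hk
      omega

lemma key {V : Type*} (G : SimpleGraph V) (M : Set V) (hM : IsModule G M)
    (FM : Set (Sym2 V)) (hFM : IsMatching (inducedOn G M) FM)
    (hEM : (inducedOn G M).edgeSet = FM)
    (F : Set (Sym2 V)) (hF : IsMatching G F)
    {a b : V} (p : G.Walk a b) (hp : IsAugPath G F p)
    {i j : ℕ} (hij : i < j) (hjl : j < p.length)
    (h1 : p.edges[i]'(by rw [p.length_edges]; omega) ∈ FM)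
    (h2 : p.edges[j]'(by rw [p.length_edges]; omega) ∈ FM) :
    ∃ (q : G.Walk a b), IsAugPath G F q ∧ q.length < p.length := by
  have hel : p.edges.length = p.length := p.length_edges
  have halt : ∀ n, (hn : n < p.length) → (p.edges[n]'(by omega) ∈ F ↔ Odd n) := by
    intro n hn
    have := hp.2.2.2.2 n (by omega)
    simpa [List.get_eq_getElem] using this
  have hedge : ∀ n, (hn : n < p.length) →
      p.edges[n]'(by omega) = s(p.getVert n, p.getVert (n+1)) :=
    fun n hn => p.edges_getElem_eq n (by omega)
  have hMadj : ∀ {x y : V}, s(x,y) ∈ FM → G.Adj x y ∧ x ∈ M ∧ y ∈ M := by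
    intro x y h; rw [← hEM, SimpleGraph.mem_edgeSet] at h; exact h
  have hInd : ∀ {x y : V}, G.Adj x y → x ∈ M → y ∈ M → s(x,y) ∈ FM := by
    intro x y h hx hy; rw [← hEM, SimpleGraph.mem_edgeSet]; exact ⟨h, hx, hy⟩
  have hinj : ∀ {n m : ℕ}, n ≤ p.length → m ≤ p.length →
      p.getVert n = p.getVert m → n = m := by
    intro n m hn hm h; exact SimpleGraph.Walk.getVert_injOn hp.1 hn hm h
  -- predecessor of an FM-edge is outside M
  have hrun : ∀ n : ℕ, 1 ≤ n → n < p.length →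
      s(p.getVert n, p.getVert (n+1)) ∈ FM → p.getVert (n-1) ∉ M := by
    intro n h1n hnl hFMe hprev
    obtain ⟨-, hnM, -⟩ := hMadj hFMe
    have hadj' : G.Adj (p.getVert (n-1)) (p.getVert n) := by
      have := p.adj_getVert_succ (i := n-1) (by omega)
      have hn : n - 1 + 1 = n := by omega
      rwa [hn] at this
    have hin : s(p.getVert (n-1), p.getVert n) ∈ FM := hInd hadj' hprev hnM
    have := hFM.2 _ hin _ hFMe (p.getVert n) (Sym2.mem_mk_right _ _) (Sym2.mem_mk_left _ _)
    rcases Sym2.eq_iff.mp this with ⟨ha1, -⟩ | ⟨ha1, -⟩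
    · have := hinj (n := n-1) (m := n) (by omega) (by omega) ha1; omega
    · have := hinj (n := n-1) (m := n+1) (by omega) (by omega) ha1; omega
  -- successor of an FM-edge is outside M
  have hrun2 : ∀ n : ℕ, n + 2 ≤ p.length →
      s(p.getVert n, p.getVert (n+1)) ∈ FM → p.getVert (n+2) ∉ M := by
    intro n hnl hFMe hnext
    obtain ⟨-, -, hn1M⟩ := hMadj hFMe
    have hadj' : G.Adj (p.getVert (n+1)) (p.getVert (n+2)) := p.adj_getVert_succ (by omega)
    have hin : s(p.getVert (n+1), p.getVert (n+2)) ∈ FM := hInd hadj' hn1M hnext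
    have := hFM.2 _ hFMe _ hin (p.getVert (n+1)) (Sym2.mem_mk_right _ _) (Sym2.mem_mk_left _ _)
    rcases Sym2.eq_iff.mp this with ⟨ha1, -⟩ | ⟨ha1, -⟩
    · have := hinj (n := n) (m := n+1) (by omega) (by omega) ha1; omega
    · have := hinj (n := n) (m := n+2) (by omega) (by omega) ha1; omega
  have e1' : s(p.getVert i, p.getVert (i+1)) ∈ FM := by
    rw [← hedge i (by omega)]; exact h1
  have e2' : s(p.getVert j, p.getVert (j+1)) ∈ FM := by
    rw [← hedge j (by omega)]; exact h2
  obtain ⟨hadj1, hxM, hyM⟩ := hMadj e1'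
  obtain ⟨hadj2, huM, hvM⟩ := hMadj e2'
  rcases Nat.even_or_odd i with hie | hio
  · rcases Nat.even_or_odd j with hje | hjo
    · -- Case A : i even, j even ; k := i, m := j - 1
      have hj2 : 2 ≤ j := by
        rw [Nat.even_iff] at hie hje; omega
      have htM : p.getVert (j-1) ∉ M := hrun j (by omega) hjl e2'
      have hj4 : i + 4 ≤ j := by
        by_contra hc
        have hj2' : j = i + 2 := by rw [Nat.even_iff] at hie hje; omega
        apply htM
        have : j - 1 = i + 1 := by omega
        rw [this]; exact hyM
      have hadjt : G.Adj (p.getVert (j-1)) (p.getVert j) := by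
        have := p.adj_getVert_succ (i := j-1) (by omega)
        have hn : j - 1 + 1 = j := by omega
        rwa [hn] at this
      have hadjkm : G.Adj (p.getVert i) (p.getVert (j-1)) :=
        (hM (p.getVert j) huM (p.getVert i) hxM (p.getVert (j-1)) htM).mp hadjt.symm
      have hnF : s(p.getVert i, p.getVert (j-1)) ∉ F := by
        intro hin
        have hfj : s(p.getVert (j-1), p.getVert j) ∈ F := by
          have h' := (halt (j-1) (by omega)).mpr (by rw [Nat.odd_iff]; rw [Nat.even_iff] at hje; omega)
          have he := hedge (j-1) (by omega)
          have hn : j - 1 + 1 = j := by omega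
          rw [he, hn] at h'; exact h'
        have := hF.2 _ hin _ hfj (p.getVert (j-1)) (Sym2.mem_mk_right _ _) (Sym2.mem_mk_left _ _)
        rcases Sym2.eq_iff.mp this with ⟨ha1, -⟩ | ⟨ha1, -⟩
        · have := hinj (n := i) (m := j-1) (by omega) (by omega) ha1; omega
        · have := hinj (n := i) (m := j) (by omega) (by omega) ha1; omega
      exact shortcut F p hp (k := i) (m := j-1) hie
        (by rw [Nat.odd_iff]; rw [Nat.even_iff] at hje; omega) (by omega) (by omega) hadjkm hnF
    · -- Case C : i even, j odd ; k := i, m := j + 2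
      have hjlen : j + 2 ≤ p.length := by
        by_contra hc
        have hjeq : j + 1 = p.length := by omega
        have hfj : s(p.getVert j, p.getVert (j+1)) ∈ F := by
          have h' := (halt j (by omega)).mpr hjo
          rwa [hedge j (by omega)] at h'
        apply hp.2.2.1
        refine ⟨s(p.getVert j, p.getVert (j+1)), hfj, ?_⟩
        have : p.getVert (j+1) = b := by rw [hjeq]; exact p.getVert_length
        rw [this]; exact Sym2.mem_mk_right _ _
      have hsM : p.getVert (j+2) ∉ M := hrun2 j hjlen e2'
      have hadjs : G.Adj (p.getVert (j+1)) (p.getVert (j+2)) := p.adj_getVert_succ (by omega)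
      have hadjkm : G.Adj (p.getVert i) (p.getVert (j+2)) :=
        (hM (p.getVert (j+1)) hvM (p.getVert i) hxM (p.getVert (j+2)) hsM).mp hadjs
      have hnF : s(p.getVert i, p.getVert (j+2)) ∉ F := by
        intro hin
        rcases Nat.eq_zero_or_pos i with hi0 | hi1
        · apply hp.2.1
          refine ⟨s(p.getVert i, p.getVert (j+2)), hin, ?_⟩
          have : p.getVert i = a := by rw [hi0]; exact p.getVert_zero
          rw [this]; exact Sym2.mem_mk_left _ _
        · have hfi : s(p.getVert (i-1), p.getVert i) ∈ F := by
            have h' := (halt (i-1) (by omega)).mpr (by rw [Nat.odd_iff]; rw [Nat.even_iff] at hie; omega)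
            have he := hedge (i-1) (by omega)
            have hn : i - 1 + 1 = i := by omega
            rw [he, hn] at h'; exact h'
          have := hF.2 _ hin _ hfi (p.getVert i) (Sym2.mem_mk_left _ _) (Sym2.mem_mk_right _ _)
          rcases Sym2.eq_iff.mp this with ⟨ha1, -⟩ | ⟨-, ha2⟩
          · have := hinj (n := i) (m := i-1) (by omega) (by omega) ha1; omega
          · have := hinj (n := j+2) (m := i-1) (by omega) (by omega) ha2; omega
      exact shortcut F p hp (k := i) (m := j+2) hie
        (by rw [Nat.odd_iff]; rw [Nat.odd_iff] at hjo; omega) (by omega) (by omega) hadjkm hnF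
  · have hwM : p.getVert (i-1) ∉ M := hrun i (by rw [Nat.odd_iff] at hio; omega) (by omega) e1'
    have hadjw : G.Adj (p.getVert (i-1)) (p.getVert i) := by
      have := p.adj_getVert_succ (i := i-1) (by rw [Nat.odd_iff] at hio; omega)
      have hn : i - 1 + 1 = i := by rw [Nat.odd_iff] at hio; omega
      rwa [hn] at this
    rcases Nat.even_or_odd j with hje | hjo
    · -- Case D : i odd, j even ; k := i - 1, m := j + 1
      have hadjkm : G.Adj (p.getVert (i-1)) (p.getVert (j+1)) :=
        ((hM (p.getVert i) hxM (p.getVert (j+1)) hvM (p.getVert (i-1)) hwM).mp hadjw.symm).symm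
      have hnF : s(p.getVert (i-1), p.getVert (j+1)) ∉ F := by
        intro hin
        rcases Nat.lt_or_ge i 2 with hi1 | hi2
        · apply hp.2.1
          refine ⟨s(p.getVert (i-1), p.getVert (j+1)), hin, ?_⟩
          have hi0 : i - 1 = 0 := by omega
          have : p.getVert (i-1) = a := by rw [hi0]; exact p.getVert_zero
          rw [this]; exact Sym2.mem_mk_left _ _
        · have hfi : s(p.getVert (i-2), p.getVert (i-1)) ∈ F := by
            have h' := (halt (i-2) (by omega)).mpr (by rw [Nat.odd_iff]; rw [Nat.odd_iff] at hio; omega)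
            have he := hedge (i-2) (by omega)
            have hn : i - 2 + 1 = i - 1 := by omega
            rw [he, hn] at h'; exact h'
          have := hF.2 _ hin _ hfi (p.getVert (i-1)) (Sym2.mem_mk_left _ _) (Sym2.mem_mk_right _ _)
          rcases Sym2.eq_iff.mp this with ⟨ha1, -⟩ | ⟨-, ha2⟩
          · have := hinj (n := i-1) (m := i-2) (by omega) (by omega) ha1; omega
          · have := hinj (n := j+1) (m := i-2) (by omega) (by omega) ha2; omega
      exact shortcut F p hp (k := i-1) (m := j+1)
        (by rw [Nat.even_iff]; rw [Nat.odd_iff] at hio; omega)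
        (by rw [Nat.odd_iff]; rw [Nat.even_iff] at hje; omega)
        (by rw [Nat.odd_iff] at hio; omega) (by omega) hadjkm hnF
    · -- Case B : i odd, j odd ; k := i - 1, m := j
      have hadjkm : G.Adj (p.getVert (i-1)) (p.getVert j) :=
        ((hM (p.getVert i) hxM (p.getVert j) huM (p.getVert (i-1)) hwM).mp hadjw.symm).symm
      have hnF : s(p.getVert (i-1), p.getVert j) ∉ F := by
        intro hin
        have hfj : s(p.getVert j, p.getVert (j+1)) ∈ F := by
          have h' := (halt j (by omega)).mpr hjo
          rwa [hedge j (by omega)] at h'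
        have := hF.2 _ hin _ hfj (p.getVert j) (Sym2.mem_mk_right _ _) (Sym2.mem_mk_left _ _)
        rcases Sym2.eq_iff.mp this with ⟨ha1, -⟩ | ⟨ha1, -⟩
        · have := hinj (n := i-1) (m := j) (by omega) (by omega) ha1; omega
        · have := hinj (n := i-1) (m := j+1) (by omega) (by omega) ha1; omega
      exact shortcut F p hp (k := i-1) (m := j)
        (by rw [Nat.even_iff]; rw [Nat.odd_iff] at hio; omega) hjo
        (by rw [Nat.odd_iff] at hio; rw [Nat.odd_iff] at hjo; omega) (by omega) hadjkm hnF

end AuxProof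

/-- If `M` is a module of `G` whose induced edge set forms a matching `F_M`, `F` is a
matching of `G` and `P` is an `F`-augmenting path of minimum length, then `P` contains
at most one edge of `F_M`. -/
theorem min_aug_path_at_most_one_module_edge {V : Type*} [Fintype V]
    (G : SimpleGraph V) (M : Set V) (hM : IsModule G M)
    (FM : Set (Sym2 V)) (hFM : IsMatching (inducedOn G M) FM)
    (hEM : (inducedOn G M).edgeSet = FM)
    (F : Set (Sym2 V)) (hF : IsMatching G F)
    (a b : V) (p : G.Walk a b) (hp : IsAugPath G F p)
    (hmin : ∀ (c d : V) (q : G.Walk c d), IsAugPath G F q → p.length ≤ q.length) :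
    ∀ e1 ∈ p.edges, ∀ e2 ∈ p.edges, e1 ∈ FM → e2 ∈ FM → e1 = e2 := by
  intro e1 he1 e2 he2 hm1 hm2
  by_contra hne
  obtain ⟨i, hi, hei⟩ := List.mem_iff_getElem.mp he1
  obtain ⟨j, hj, hej⟩ := List.mem_iff_getElem.mp he2
  have hel : p.edges.length = p.length := p.length_edges
  rcases lt_trichotomy i j with h | h | h
  · obtain ⟨q, hq, hql⟩ := key G M hM FM hFM hEM F hF p hp h (by omega)
      (by rw [hei]; exact hm1) (by rw [hej]; exact hm2)
    exact absurd (hmin a b q hq) (by omega)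
  · subst h
    exact hne (by rw [← hei, ← hej])
  · obtain ⟨q, hq, hql⟩ := key G M hM FM hFM hEM F hF p hp h (by omega)
      (by rw [hej]; exact hm2) (by rw [hei]; exact hm1)
    exact absurd (hmin a b q hq) (by omega)
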